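/- arXiv:1504.05121 — 4 statements merged into one kernel-verified Lean document; each statement's English description precedes it below -/
import Mathlib

section
/- Let D ∈ ℕ. There exists a constant C = C(D) such that whenever M, M' ∈ M_D, j ∈ ℕ, d₀ ≥ -1, d₁, …, d_m ∈ ℕ satisfy M·J·A_j = A_{d₀}·J·A_{d₁}···J·A_{d_m}·M', one has m ≤ C. That is, the length m of the output string in the transition relation is uniformly bounded in terms of D alone. -/
/-- The set `M_D` of 2×2 integer matrices with determinant `±D` satisfying one of the
six type conditions (Types I–VI). Entries: α = M 0 0, β = M 0 1, γ = M 1 0, δ = M 1 1. -/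
def MD (D : ℕ) (M : Matrix (Fin 2) (Fin 2) ℤ) : Prop :=
  (M.det = (D : ℤ) ∨ M.det = -(D : ℤ)) ∧
  ((M 1 0 = 0 ∧ 0 ≤ M 0 1 ∧ 0 < M 0 0 ∧ 0 < M 1 1 ∧ M 0 1 < M 1 1) ∨
   (M 1 1 = 0 ∧ 0 ≤ M 0 0 ∧ 0 < M 0 1 ∧ 0 < M 1 0 ∧ M 0 0 < M 1 0) ∨
   (M 0 0 = 0 ∧ 0 ≤ M 1 1 ∧ 0 < M 0 1 ∧ 0 < M 1 0 ∧ M 1 1 < M 0 1) ∨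
   (M 0 1 = 0 ∧ 0 ≤ M 1 0 ∧ 0 < M 0 0 ∧ 0 < M 1 1 ∧ M 1 0 < M 0 0) ∨
   (M 0 0 < 0 ∧ 0 < M 0 1 ∧ 0 < M 1 0 ∧ 0 < M 1 1 ∧ |M 0 0| < M 1 0) ∨
   (M 0 1 < 0 ∧ 0 < M 0 0 ∧ 0 < M 1 0 ∧ 0 < M 1 1 ∧ |M 0 1| < M 1 1))

/-- The matrix `A_i = [[1,i],[0,1]]`. -/
def matA (i : ℤ) : Matrix (Fin 2) (Fin 2) ℤ := !![1, i; 0, 1]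

/-- The matrix `J = [[0,1],[1,0]]`. -/
def matJ : Matrix (Fin 2) (Fin 2) ℤ := !![0, 1; 1, 0]


/-- Upper bound on the bottom-right entry of a matrix in `M_D`. -/
lemma MD_entry_le (D : ℕ) (hD : 0 < D) (M : Matrix (Fin 2) (Fin 2) ℤ) (h : MD D M) :
    M 1 1 ≤ (D : ℤ) := by
  obtain ⟨hdet, htype⟩ := h
  rw [Matrix.det_fin_two] at hdet
  have hD' : (1 : ℤ) ≤ (D : ℤ) := by exact_mod_cast hD
  rcases htype with ⟨h1,h2,h3,h4,h5⟩|⟨h1,h2,h3,h4,h5⟩|⟨h1,h2,h3,h4,h5⟩|⟨h1,h2,h3,h4,h5⟩|⟨h1,h2,h3,h4,h5⟩|⟨h1,h2,h3,h4,h5⟩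
  · rcases hdet with hd | hd <;> nlinarith
  · linarith
  · rcases hdet with hd | hd <;> nlinarith
  · rcases hdet with hd | hd <;> nlinarith
  · rw [abs_of_neg h1] at h5
    rcases hdet with hd | hd <;> nlinarith
  · rw [abs_of_neg h1] at h5
    rcases hdet with hd | hd <;> nlinarith

/-- Lower bound: pairing against the first column of a matrix in `M_D`. -/
lemma MD_col_lb (D : ℕ) (M' : Matrix (Fin 2) (Fin 2) ℤ) (h : MD D M')
    (c e : ℤ) (hc : 0 ≤ c) (hce : c ≤ e) :
    c ≤ c * M' 0 0 + e * M' 1 0 := by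
  obtain ⟨_, htype⟩ := h
  rcases htype with ⟨h1,h2,h3,h4,h5⟩|⟨h1,h2,h3,h4,h5⟩|⟨h1,h2,h3,h4,h5⟩|⟨h1,h2,h3,h4,h5⟩|⟨h1,h2,h3,h4,h5⟩|⟨h1,h2,h3,h4,h5⟩
  · nlinarith
  · nlinarith
  · nlinarith
  · nlinarith
  · rw [abs_of_neg h1] at h5
    nlinarith [mul_nonneg hc (by linarith : (0:ℤ) ≤ M' 0 0 - (1 - M' 1 0)),
      mul_nonneg (by linarith : (0:ℤ) ≤ e - c) (by linarith : (0:ℤ) ≤ M' 1 0)]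
  · nlinarith

lemma Q_bounds (d : ℕ → ℤ) (m : ℕ) (hd : ∀ i, 1 ≤ i → i ≤ m → 0 < d i)
    (Q : Matrix (Fin 2) (Fin 2) ℤ)
    (hQ : Q = ((List.range m).map (fun i => matJ * matA (d (i + 1)))).prod) :
    0 ≤ Q 1 0 ∧ Q 1 0 ≤ Q 1 1 ∧ 1 ≤ Q 1 1 ∧ (m : ℤ) ≤ Q 1 1 ∧
      (1 ≤ m → 1 ≤ Q 1 0) ∧ (m : ℤ) - 1 ≤ Q 1 0 := by
  induction m generalizing Q with
  | zero =>
      subst hQ; simp [Matrix.one_apply]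
  | succ n ih =>
      set P := ((List.range n).map (fun i => matJ * matA (d (i + 1)))).prod with hP
      have hih := ih (fun i h1 h2 => hd i h1 (le_trans h2 (Nat.le_succ n))) P rfl
      obtain ⟨hc0, hcd, hd1, hnd, hc1, hnc⟩ := hih
      have hk : 1 ≤ d (n + 1) := hd (n + 1) (by omega) le_rfl
      have hJA : matJ * matA (d (n + 1)) = !![0,1;1,d (n+1)] := by simp [matJ, matA]
      have hstep : Q = P * !![0,1;1,d (n+1)] := by
        rw [hQ, List.range_succ, List.map_append, List.prod_append]
        simp [hJA]
        rfl
      have e10 : Q 1 0 = P 1 1 := by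
        rw [hstep, Matrix.mul_apply, Fin.sum_univ_two]
        simp
      have e11 : Q 1 1 = P 1 0 + P 1 1 * d (n + 1) := by
        rw [hstep, Matrix.mul_apply, Fin.sum_univ_two]
        simp
      have key : P 1 1 * 1 ≤ P 1 1 * d (n + 1) := by
        apply mul_le_mul_of_nonneg_left hk (by linarith)
      refine ⟨?_, ?_, ?_, ?_, ?_, ?_⟩ <;> simp only [e10, e11] <;> push_cast
      · linarith
      · linarith
      · linarith
      · rcases Nat.eq_zero_or_pos n with hn | hn
        · subst hn; push_cast; linarith
        · have h1c : 1 ≤ P 1 0 := hc1 hn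
          have hn' : (1 : ℤ) ≤ (n : ℤ) := by exact_mod_cast hn
          linarith
      · intro _; linarith
      · linarith

/-- Uniform bound on the length of the output string in the transition relation:
there is `C = C(D)` such that whenever `M, M' ∈ M_D`, `j ≥ 1`, `d₀ ≥ -1`,
`d₁,…,d_m ≥ 1` satisfy `M·J·A_j = A_{d₀}·J·A_{d₁}···J·A_{d_m}·M'`, one has `m ≤ C`. -/
theorem transition_length_bounded (D : ℕ) (hD : 0 < D) :
    ∃ C : ℕ, ∀ (M M' : Matrix (Fin 2) (Fin 2) ℤ), MD D M → MD D M' →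
      ∀ (j : ℤ), 0 < j → ∀ (m : ℕ) (d : ℕ → ℤ),
        (-1 : ℤ) ≤ d 0 → (∀ i, 1 ≤ i → i ≤ m → 0 < d i) →
        M * matJ * matA j =
          matA (d 0) * ((List.range m).map (fun i => matJ * matA (d (i + 1)))).prod * M' →
        m ≤ C := by
  refine ⟨D + 1, ?_⟩
  intro M M' hM hM' j hj m d hd0 hd heq
  set Q := ((List.range m).map (fun i => matJ * matA (d (i + 1)))).prod with hQdef
  obtain ⟨hc0, hcd, hd1, hmd, hc1, hmc⟩ := Q_bounds d m hd Q hQdef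
  have h := Matrix.ext_iff.mpr heq 1 0
  have lhs : (M * matJ * matA j) 1 0 = M 1 1 := by
    rw [Matrix.mul_apply, Fin.sum_univ_two, Matrix.mul_apply, Fin.sum_univ_two,
      Matrix.mul_apply, Fin.sum_univ_two]
    simp [matJ, matA]
  have rhs : (matA (d 0) * Q * M') 1 0 = Q 1 0 * M' 0 0 + Q 1 1 * M' 1 0 := by
    rw [Matrix.mul_apply, Fin.sum_univ_two, Matrix.mul_apply, Fin.sum_univ_two,
      Matrix.mul_apply, Fin.sum_univ_two]
    simp [matA]
  rw [lhs, rhs] at h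
  have hle : M 1 1 ≤ (D : ℤ) := MD_entry_le D hD M hM
  have hlb : Q 1 0 ≤ Q 1 0 * M' 0 0 + Q 1 1 * M' 1 0 :=
    MD_col_lb D M' hM' (Q 1 0) (Q 1 1) hc0 hcd
  have : (m : ℤ) ≤ (D : ℤ) + 1 := by linarith
  exact_mod_cast this
end

section
/- Let D ∈ ℕ. There exists a constant K = K(D) such that: if c₁, …, c_k ∈ ℕ and M, M' ∈ M_D satisfy M·J·A_{c₁}·J·A_{c₂}···J·A_{c_k} = (A_{-1}·J·A_1)^k · M', then k ≤ K. (In particular, since (A_{-1}JA_1)² = I, if k is even then M·J·A_{c₁}···J·A_{c_k} = M', and the Fibonacci growth of the bottom row forces k to be bounded.) -/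
lemma le_mul_of_pos {x y : ℤ} (hx : 0 < x) (hy : 0 < y) : x ≤ x * y ∧ y ≤ x * y :=
  ⟨by nlinarith, by nlinarith⟩

lemma MD_bound {D : ℕ} (hD : 0 < D) {M : Matrix (Fin 2) (Fin 2) ℤ} (h : MD D M) :
    |M 0 0| ≤ D ∧ |M 0 1| ≤ D ∧ |M 1 0| ≤ D ∧ |M 1 1| ≤ D := by
  obtain ⟨hdet, htype⟩ := h
  rw [Matrix.det_fin_two] at hdet
  set a := M 0 0 with ha'; set b := M 0 1 with hb'; set c := M 1 0 with hc'
  set d := M 1 1 with hd'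
  have hD' : (1 : ℤ) ≤ D := by exact_mod_cast hD
  simp only [abs_le]
  rcases htype with ⟨e1,e2,e3,e4,e5⟩|⟨e1,e2,e3,e4,e5⟩|⟨e1,e2,e3,e4,e5⟩|⟨e1,e2,e3,e4,e5⟩|⟨e1,e2,e3,e4,e5⟩|⟨e1,e2,e3,e4,e5⟩
  · obtain ⟨h1, h2⟩ := le_mul_of_pos e3 e4
    have h0 : b * c = 0 := by rw [e1, mul_zero]
    omega
  · obtain ⟨h1, h2⟩ := le_mul_of_pos e3 e4
    have : b * c = c * b := mul_comm _ _
    have h0 : a * d = 0 := by rw [e1, mul_zero]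
    omega
  · obtain ⟨h1, h2⟩ := le_mul_of_pos e3 e4
    have : b * c = c * b := mul_comm _ _
    have h0 : a * d = 0 := by rw [e1, zero_mul]
    omega
  · obtain ⟨h1, h2⟩ := le_mul_of_pos e3 e4
    have h0 : b * c = 0 := by rw [e1, zero_mul]
    omega
  · rw [abs_of_neg e1] at e5
    have h1 : a * d < 0 := mul_neg_of_neg_of_pos e1 e4
    have h2 : 0 < b * c := mul_pos e2 e3
    obtain ⟨h3, h4⟩ := le_mul_of_pos e2 e3
    obtain ⟨h5, h6⟩ := le_mul_of_pos (show (0:ℤ) < -a by omega) e4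
    have h7 : (-a) * d = -(a * d) := by ring
    omega
  · rw [abs_of_neg e1] at e5
    have h1 : b * c < 0 := mul_neg_of_neg_of_pos e1 e3
    have h2 : 0 < a * d := mul_pos e2 e4
    obtain ⟨h3, h4⟩ := le_mul_of_pos e2 e4
    obtain ⟨h5, h6⟩ := le_mul_of_pos (show (0:ℤ) < -b by omega) e3
    have h7 : (-b) * c = -(b * c) := by ring
    omega

lemma matJA (c : ℤ) : matJ * matA c = !![0, 1; 1, c] := by
  ext i j
  fin_cases i <;> fin_cases j <;> simp [matJ, matA, Matrix.mul_apply, Fin.sum_univ_two]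

lemma fib_grow (cs : List ℤ) (hcs : ∀ x ∈ cs, 0 < x) :
    ∀ (m : ℕ) (a b : ℤ), 0 ≤ a → 0 ≤ b → (Nat.fib m : ℤ) ≤ b →
      (Nat.fib (m + 1) : ℤ) ≤ a + b →
      (Nat.fib (m + cs.length + 1) : ℤ) ≤
        a * ((cs.map fun d => matJ * matA d).prod 0 0 + (cs.map fun d => matJ * matA d).prod 0 1) +
        b * ((cs.map fun d => matJ * matA d).prod 1 0 + (cs.map fun d => matJ * matA d).prod 1 1) := by
  induction cs with
  | nil =>
    intro m a b ha hb hfb hfab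
    simp [Matrix.one_apply]
    linarith
  | cons c t ih =>
    intro m a b ha hb hfb hfab
    have hc : 0 < c := hcs c (by simp)
    have ht : ∀ x ∈ t, 0 < x := fun x hx => hcs x (by simp [hx])
    have hfib2 : (Nat.fib (m + 2) : ℤ) ≤ b + (a + c * b) := by
      have : Nat.fib (m + 2) = Nat.fib m + Nat.fib (m + 1) := by
        rw [Nat.fib_add_two]
      rw [this]; push_cast
      nlinarith
    have key := ih ht (m + 1) b (a + c * b) hb (by nlinarith) (by nlinarith)
      (by simpa using hfib2)
    set P := (t.map fun d => matJ * matA d).prod with hP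
    have hlen : m + (c :: t).length + 1 = (m + 1) + t.length + 1 := by
      simp; omega
    rw [hlen]
    have hentry : ∀ i j, ((c :: t).map fun d => matJ * matA d).prod i j
        = (!![0,1;1,c] * P) i j := by
      intro i j
      simp [List.map_cons, List.prod_cons, matJA, hP]
    have h00 := hentry 0 0; have h01 := hentry 0 1
    have h10 := hentry 1 0; have h11 := hentry 1 1
    rw [h00, h01, h10, h11]
    have m00 : (!![0,1;1,c] * P) 0 0 = P 1 0 := by
      simp [Matrix.mul_apply, Fin.sum_univ_two]
    have m01 : (!![0,1;1,c] * P) 0 1 = P 1 1 := by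
      simp [Matrix.mul_apply, Fin.sum_univ_two]
    have m10 : (!![0,1;1,c] * P) 1 0 = P 0 0 + c * P 1 0 := by
      simp [Matrix.mul_apply, Fin.sum_univ_two]
    have m11 : (!![0,1;1,c] * P) 1 1 = P 0 1 + c * P 1 1 := by
      simp [Matrix.mul_apply, Fin.sum_univ_two]
    rw [m00, m01, m10, m11]
    calc (Nat.fib ((m+1) + t.length + 1) : ℤ)
        ≤ b * (P 0 0 + P 0 1) + (a + c * b) * (P 1 0 + P 1 1) := key
      _ = a * (P 1 0 + P 1 1) + b * ((P 0 0 + c * P 1 0) + (P 0 1 + c * P 1 1)) := by ring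

lemma matX_eq : matA (-1) * matJ * matA 1 = !![-1, 0; 1, 1] := by
  ext i j
  fin_cases i <;> fin_cases j <;>
    simp [matA, matJ, Matrix.mul_apply, Fin.sum_univ_two]

lemma matX_sq : (matA (-1) * matJ * matA 1) ^ 2 = 1 := by
  rw [matX_eq, sq]
  ext i j
  fin_cases i <;> fin_cases j <;>
    simp [Matrix.mul_apply, Fin.sum_univ_two, Matrix.one_apply]

lemma matX_pow (k : ℕ) : (matA (-1) * matJ * matA 1) ^ k = 1 ∨
    (matA (-1) * matJ * matA 1) ^ k = !![-1, 0; 1, 1] := by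
  induction k with
  | zero => left; rw [pow_zero]
  | succ n ih =>
    rcases ih with h | h
    · right; rw [pow_succ, h, one_mul, matX_eq]
    · left
      rw [pow_succ, h, ← matX_eq, ← sq, matX_sq]

lemma MD_row_nonneg {D : ℕ} {M : Matrix (Fin 2) (Fin 2) ℤ} (h : MD D M) :
    0 ≤ M 1 0 ∧ 0 ≤ M 1 1 ∧ 1 ≤ M 1 0 + M 1 1 := by
  obtain ⟨-, htype⟩ := h
  rcases htype with ⟨e1,e2,e3,e4,e5⟩|⟨e1,e2,e3,e4,e5⟩|⟨e1,e2,e3,e4,e5⟩|⟨e1,e2,e3,e4,e5⟩|⟨e1,e2,e3,e4,e5⟩|⟨e1,e2,e3,e4,e5⟩ <;> omega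

/-- Uniform bound `K = K(D)`: if `c₁,…,c_k ≥ 1` and `M, M' ∈ M_D` satisfy
`M·J·A_{c₁}···J·A_{c_k} = (A_{-1}·J·A_1)^k · M'`, then `k ≤ K`. -/
theorem contracting_strings_bounded (D : ℕ) (hD : 0 < D) :
    ∃ K : ℕ, ∀ (k : ℕ) (cs : List ℤ), cs.length = k → (∀ x ∈ cs, 0 < x) →
      ∀ (M M' : Matrix (Fin 2) (Fin 2) ℤ), MD D M → MD D M' →
        M * (cs.map (fun d => matJ * matA d)).prod =
          (matA (-1) * matJ * matA 1) ^ k * M' → k ≤ K := by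
  refine ⟨4 * D + 6, ?_⟩
  intro k cs hlen hpos M M' hM hM' heq
  by_contra hk
  push_neg at hk
  -- LHS bottom row sum is large
  obtain ⟨ha, hb, hab⟩ := MD_row_nonneg hM
  set P := (cs.map fun d => matJ * matA d).prod with hP
  have hgrow := fib_grow cs hpos 0 (M 1 0) (M 1 1) ha hb (by simpa using hb) (by simpa using hab)
  rw [← hP] at hgrow
  simp only [zero_add] at hgrow
  rw [hlen] at hgrow
  -- bottom row of LHS via mul_apply
  have hL0 : (M * P) 1 0 = M 1 0 * P 0 0 + M 1 1 * P 1 0 := by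
    simp [Matrix.mul_apply, Fin.sum_univ_two]
  have hL1 : (M * P) 1 1 = M 1 0 * P 0 1 + M 1 1 * P 1 1 := by
    simp [Matrix.mul_apply, Fin.sum_univ_two]
  -- RHS bottom row is bounded
  obtain ⟨b0, b1, b2, b3⟩ := MD_bound hD hM'
  have hRbound : |((matA (-1) * matJ * matA 1) ^ k * M') 1 0| +
      |((matA (-1) * matJ * matA 1) ^ k * M') 1 1| ≤ 4 * D := by
    rcases matX_pow k with h | h <;> rw [h]
    · rw [one_mul]
      have := abs_nonneg (M' 0 0)
      have := abs_nonneg (M' 0 1)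
      linarith
    · have e0 : (!![(-1:ℤ), 0; 1, 1] * M') 1 0 = M' 0 0 + M' 1 0 := by
        simp [Matrix.mul_apply, Fin.sum_univ_two]
      have e1 : (!![(-1:ℤ), 0; 1, 1] * M') 1 1 = M' 0 1 + M' 1 1 := by
        simp [Matrix.mul_apply, Fin.sum_univ_two]
      rw [e0, e1]
      have := abs_add_le (M' 0 0) (M' 1 0)
      have := abs_add_le (M' 0 1) (M' 1 1)
      linarith
  -- combine
  have hfib_le : (Nat.fib (k + 1) : ℤ) ≤ 4 * D := by
    have h10 : (M * P) 1 0 = ((matA (-1) * matJ * matA 1) ^ k * M') 1 0 := by rw [heq]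
    have h11 : (M * P) 1 1 = ((matA (-1) * matJ * matA 1) ^ k * M') 1 1 := by rw [heq]
    have habs0 := le_abs_self (((matA (-1) * matJ * matA 1) ^ k * M') 1 0)
    have habs1 := le_abs_self (((matA (-1) * matJ * matA 1) ^ k * M') 1 1)
    have : M 1 0 * (P 0 0 + P 0 1) + M 1 1 * (P 1 0 + P 1 1)
        = (M * P) 1 0 + (M * P) 1 1 := by rw [hL0, hL1]; ring
    rw [this, h10, h11] at hgrow
    linarith
  have hfib_ge : 4 * D + 8 ≤ Nat.fib (k + 1) := by
    have h5 : 5 ≤ k + 1 := by omega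
    have := Nat.le_fib_self h5
    omega
  have : (4 * D + 8 : ℤ) ≤ 4 * D := by
    calc (4 * D + 8 : ℤ) ≤ (Nat.fib (k+1) : ℤ) := by exact_mod_cast hfib_ge
      _ ≤ 4 * D := hfib_le
  omega
end

section
/- Let T be the Gauss map on [0,1) and μ the Gauss measure dμ = dx/((log 2)(1+x)). There is an absolute constant C > 0 such that for every measurable set E ⊆ [0,1), every n ∈ ℕ, and every rank-n continued-fraction cylinder set C_s: (1/C)·μ(E)·μ(C_s) ≤ μ(T^{-n}E ∩ C_s) ≤ C·μ(E)·μ(C_s). -/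
open MeasureTheory Filter

/-- The Gauss map `T(x) = 1/x - ⌊1/x⌋` (with `T 0 = 0`). -/
noncomputable def gauss (x : ℝ) : ℝ := if x = 0 then 0 else x⁻¹ - ⌊x⁻¹⌋

/-- `cfDigit x i` is the continued fraction partial quotient `a_{i+1}(x)`
of `x ∈ [0,1)`, namely `⌊1 / T^i x⌋`. -/
noncomputable def cfDigit (x : ℝ) (i : ℕ) : ℤ := ⌊(gauss^[i] x)⁻¹⌋

/-- The continued fraction cylinder set of the string `s = [c₁,…,c_n]`. -/
def cyl (s : List ℤ) : Set ℝ :=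
  {x | x ∈ Set.Ico (0 : ℝ) 1 ∧ ∀ i < s.length, cfDigit x i = s.getD i 0}

/-- The Gauss measure `μ(A) = ∫_A dx / ((log 2)(1+x))` on `[0,1)`. -/
noncomputable def gaussMeasure : Measure ℝ :=
  (volume.restrict (Set.Ico (0 : ℝ) 1)).withDensity
    (fun x => ENNReal.ofReal (1 / (Real.log 2 * (1 + x))))

open scoped Classical in
/-- The number of `i < n` with `T^i x` in the cylinder of `s`. -/
noncomputable def cfCount (x : ℝ) (s : List ℤ) (n : ℕ) : ℕ :=
  ((Finset.range n).filter (fun i => gauss^[i] x ∈ cyl s)).card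

/-- `x ∈ [0,1)` is CF-normal: every finite string of positive integers occurs in the
continued fraction expansion of `x` with limiting frequency equal to the Gauss
measure of its cylinder set. -/
noncomputable def cfNormal (x : ℝ) : Prop :=
  x ∈ Set.Ico (0 : ℝ) 1 ∧
  ∀ s : List ℤ, s ≠ [] → (∀ c ∈ s, 0 < c) →
    Tendsto (fun n : ℕ => (cfCount x s n : ℝ) / n) atTop
      (nhds (gaussMeasure (cyl s)).toReal)

/-- A real number `y` is CF-normal if its fractional part is CF-normal. -/
noncomputable def cfNormalReal (y : ℝ) : Prop := cfNormal (Int.fract y)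

/-- The action of an integer matrix on a real number by a linear fractional
transformation. -/
noncomputable def mobius (M : Matrix (Fin 2) (Fin 2) ℤ) (x : ℝ) : ℝ :=
  ((M 0 0 : ℝ) * x + (M 0 1 : ℝ)) / ((M 1 0 : ℝ) * x + (M 1 1 : ℝ))

/-! ### Auxiliary material for Rényi's condition -/

/-- Continuant data `(a, b, c, d)` of a string: the inverse branch of `T^n`
associated to the cylinder of `s` is `t ↦ (a t + b)/(c t + d)`. -/
def konts : List ℤ → ℤ × ℤ × ℤ × ℤ
  | [] => (1, 0, 0, 1)
  | k :: s =>
    let p := konts s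
    (p.2.2.1, p.2.2.2, p.1 + k * p.2.2.1, p.2.1 + k * p.2.2.2)

/-- The inverse branch of `T^n` associated to the cylinder of `s`. -/
noncomputable def kmap (s : List ℤ) (t : ℝ) : ℝ :=
  (((konts s).1 : ℝ) * t + ((konts s).2.1 : ℝ)) /
    (((konts s).2.2.1 : ℝ) * t + ((konts s).2.2.2 : ℝ))

lemma kmap_nil (t : ℝ) : kmap [] t = t := by simp [kmap, konts]

lemma konts_prop' : ∀ s : List ℤ, (∀ k ∈ s, 0 < k) →
    0 ≤ (konts s).1 ∧ 0 ≤ (konts s).2.1 ∧ 0 ≤ (konts s).2.2.1 ∧ 1 ≤ (konts s).2.2.2 ∧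
    (konts s).2.2.1 ≤ (konts s).2.2.2 ∧
    (konts s).1 + (konts s).2.2.1 ≤ (konts s).2.1 + (konts s).2.2.2 ∧
    ((konts s).1 * (konts s).2.2.2 - (konts s).2.1 * (konts s).2.2.1 = 1 ∨
     (konts s).1 * (konts s).2.2.2 - (konts s).2.1 * (konts s).2.2.1 = -1) := by
  intro s hs
  induction s with
  | nil => simp [konts]
  | cons k s ih =>
    have hk : 1 ≤ k := hs k List.mem_cons_self
    obtain ⟨ha, hb, hc, hd, hcd, habcd, hdet⟩ := ih (fun c hc => hs c (List.mem_cons_of_mem _ hc))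
    set a := (konts s).1; set b := (konts s).2.1; set c := (konts s).2.2.1; set d := (konts s).2.2.2
    have h1 : konts (k :: s) = (c, d, a + k * c, b + k * d) := rfl
    rw [h1]; dsimp only
    refine ⟨hc, by linarith, by nlinarith, by nlinarith, by nlinarith, by nlinarith, ?_⟩
    rcases hdet with h | h
    · right; nlinarith
    · left; nlinarith

section
variable {s : List ℤ} (hs : ∀ k ∈ s, 0 < k)

include hs

lemma kmap_denom_pos {t : ℝ} (ht : 0 ≤ t) :
    0 < ((konts s).2.2.1 : ℝ) * t + ((konts s).2.2.2 : ℝ) := by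
  obtain ⟨ha, hb, hc, hd, -, -, -⟩ := konts_prop' s hs
  have hc' : (0:ℝ) ≤ ((konts s).2.2.1 : ℝ) := by exact_mod_cast hc
  have hd' : (1:ℝ) ≤ ((konts s).2.2.2 : ℝ) := by exact_mod_cast hd
  nlinarith

lemma kmap_cons {k : ℤ} (hk : 0 < k) {t : ℝ} (ht : 0 ≤ t) :
    kmap (k :: s) t = (k + kmap s t)⁻¹ := by
  have h1 : konts (k :: s) = ((konts s).2.2.1, (konts s).2.2.2,
      (konts s).1 + k * (konts s).2.2.1, (konts s).2.1 + k * (konts s).2.2.2) := rfl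
  have hden := kmap_denom_pos hs ht
  have hden2 := kmap_denom_pos (s := k :: s) (List.forall_mem_cons.2 ⟨hk, hs⟩) ht
  rw [h1] at hden2; dsimp only at hden2
  push_cast at hden2
  have h2 : (k : ℝ) + kmap s t =
      ((((konts s).1 : ℝ) + k * (konts s).2.2.1) * t + (((konts s).2.1 : ℝ) + k * (konts s).2.2.2)) /
        (((konts s).2.2.1 : ℝ) * t + ((konts s).2.2.2 : ℝ)) := by
    rw [kmap, eq_div_iff hden.ne', add_mul, div_mul_cancel₀ _ hden.ne']; ring
  rw [h2, inv_div, kmap, h1]; dsimp only; push_cast; ring_nf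

lemma kmap_injOn : Set.InjOn (kmap s) (Set.Ici 0) := by
  obtain ⟨-, -, -, -, -, -, hdet⟩ := konts_prop' s hs
  intro t ht u hu h
  have h1 := kmap_denom_pos hs ht
  have h2 := kmap_denom_pos hs hu
  rw [kmap, kmap, div_eq_div_iff h1.ne' h2.ne'] at h
  set a := ((konts s).1 : ℝ); set b := ((konts s).2.1 : ℝ)
  set c := ((konts s).2.2.1 : ℝ); set d := ((konts s).2.2.2 : ℝ)
  have key : (a * d - b * c) * t = (a * d - b * c) * u := by nlinarith
  have hcast : a * d - b * c =
      (((konts s).1 * (konts s).2.2.2 - (konts s).2.1 * (konts s).2.2.1 : ℤ) : ℝ) := by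
    push_cast; ring
  rcases hdet with hh | hh <;> rw [hcast, hh] at key <;> push_cast at key <;> linarith

lemma kmap_hasDerivAt {t : ℝ} (ht : 0 ≤ t) :
    HasDerivAt (kmap s)
      ((((konts s).1 * (konts s).2.2.2 - (konts s).2.1 * (konts s).2.2.1 : ℤ) : ℝ) /
        (((konts s).2.2.1 : ℝ) * t + ((konts s).2.2.2 : ℝ))^2) t := by
  have hden := kmap_denom_pos hs ht
  have h1 : HasDerivAt (fun u : ℝ => ((konts s).1 : ℝ) * u + ((konts s).2.1 : ℝ))
      ((konts s).1 : ℝ) t := by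
    simpa using ((hasDerivAt_id t).const_mul ((konts s).1 : ℝ)).add_const ((konts s).2.1 : ℝ)
  have h2 : HasDerivAt (fun u : ℝ => ((konts s).2.2.1 : ℝ) * u + ((konts s).2.2.2 : ℝ))
      ((konts s).2.2.1 : ℝ) t := by
    simpa using ((hasDerivAt_id t).const_mul ((konts s).2.2.1 : ℝ)).add_const ((konts s).2.2.2 : ℝ)
  have := h1.div h2 hden.ne'
  refine this.congr_deriv ?_
  push_cast
  ring

lemma kmap_abs_deriv_bounds {t : ℝ} (ht : t ∈ Set.Ico (0:ℝ) 1) :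
    1 / (4 * ((konts s).2.2.2 : ℝ)^2) ≤
      |(((konts s).1 * (konts s).2.2.2 - (konts s).2.1 * (konts s).2.2.1 : ℤ) : ℝ) /
        (((konts s).2.2.1 : ℝ) * t + ((konts s).2.2.2 : ℝ))^2| ∧
    |(((konts s).1 * (konts s).2.2.2 - (konts s).2.1 * (konts s).2.2.1 : ℤ) : ℝ) /
        (((konts s).2.2.1 : ℝ) * t + ((konts s).2.2.2 : ℝ))^2| ≤ 1 / ((konts s).2.2.2 : ℝ)^2 := by
  obtain ⟨ha, hb, hc, hd, hcd, -, hdet⟩ := konts_prop' s hs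
  have hden := kmap_denom_pos hs ht.1
  have hc' : (0:ℝ) ≤ ((konts s).2.2.1 : ℝ) := by exact_mod_cast hc
  have hd' : (1:ℝ) ≤ ((konts s).2.2.2 : ℝ) := by exact_mod_cast hd
  have hcd' : ((konts s).2.2.1 : ℝ) ≤ ((konts s).2.2.2 : ℝ) := by exact_mod_cast hcd
  set c := ((konts s).2.2.1 : ℝ) with hcdef; set d := ((konts s).2.2.2 : ℝ) with hddef
  have hnum : |(((konts s).1 * (konts s).2.2.2 - (konts s).2.1 * (konts s).2.2.1 : ℤ) : ℝ)| = 1 := by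
    rcases hdet with h | h <;> rw [h] <;> norm_num
  have hlow : d ≤ c * t + d := by nlinarith [ht.1]
  have hhigh : c * t + d ≤ 2 * d := by nlinarith [ht.2, ht.1]
  rw [abs_div, hnum, abs_of_pos (by positivity : (0:ℝ) < (c*t+d)^2)]
  constructor
  · exact one_div_le_one_div_of_le (by positivity) (by nlinarith)
  · exact one_div_le_one_div_of_le (by positivity) (by nlinarith)

lemma kmap_image_volume_bounds {E : Set ℝ} (hE : MeasurableSet E)
    (hE1 : E ⊆ Set.Ico (0:ℝ) 1) :
    ENNReal.ofReal (1 / (4 * ((konts s).2.2.2 : ℝ)^2)) * volume E ≤ volume (kmap s '' E) ∧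
    volume (kmap s '' E) ≤ ENNReal.ofReal (1 / ((konts s).2.2.2 : ℝ)^2) * volume E := by
  set f' : ℝ → ℝ := fun t =>
    (((konts s).1 * (konts s).2.2.2 - (konts s).2.1 * (konts s).2.2.1 : ℤ) : ℝ) /
      (((konts s).2.2.1 : ℝ) * t + ((konts s).2.2.2 : ℝ))^2 with hf'def
  have hder : ∀ x ∈ E, HasDerivWithinAt (kmap s) (f' x) E x := fun x hx =>
    (kmap_hasDerivAt hs (hE1 hx).1).hasDerivWithinAt
  have hinj : Set.InjOn (kmap s) E := (kmap_injOn hs).mono (fun x hx => (hE1 hx).1)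
  have hvol : volume (kmap s '' E) = ∫⁻ x in E, ENNReal.ofReal |f' x| := by
    rw [← setLIntegral_one, lintegral_image_eq_lintegral_abs_det_fderiv_mul volume hE
      (fun x hx => (hder x hx).hasFDerivWithinAt) hinj]
    simp [ContinuousLinearMap.det_toSpanSingleton]
  have hmeas : Measurable fun x => ENNReal.ofReal |f' x| := by
    apply Measurable.ennreal_ofReal
    apply Measurable.abs
    apply Measurable.div measurable_const
    exact ((measurable_const.mul measurable_id).add measurable_const).pow measurable_const
  constructor
  · rw [hvol]
    calc ENNReal.ofReal (1 / (4 * ((konts s).2.2.2 : ℝ)^2)) * volume E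
        = ∫⁻ _ in E, ENNReal.ofReal (1 / (4 * ((konts s).2.2.2 : ℝ)^2)) := by
          rw [setLIntegral_const, mul_comm]
      _ ≤ ∫⁻ x in E, ENNReal.ofReal |f' x| := by
          refine setLIntegral_mono hmeas (fun x hx => ?_)
          exact ENNReal.ofReal_le_ofReal (kmap_abs_deriv_bounds hs (hE1 hx)).1
  · rw [hvol]
    calc ∫⁻ x in E, ENNReal.ofReal |f' x|
        ≤ ∫⁻ _ in E, ENNReal.ofReal (1 / ((konts s).2.2.2 : ℝ)^2) := by
          refine setLIntegral_mono measurable_const (fun x hx => ?_)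
          exact ENNReal.ofReal_le_ofReal (kmap_abs_deriv_bounds hs (hE1 hx)).2
      _ = ENNReal.ofReal (1 / ((konts s).2.2.2 : ℝ)^2) * volume E := by
          rw [setLIntegral_const, mul_comm]

end

lemma gauss_mem_Ico {x : ℝ} (hx : x ∈ Set.Ico (0:ℝ) 1) : gauss x ∈ Set.Ico (0:ℝ) 1 := by
  rcases eq_or_ne x 0 with rfl | hx0
  · simp [gauss]
  · have : gauss x = Int.fract x⁻¹ := by rw [gauss, if_neg hx0, Int.self_sub_floor]
    rw [this]
    exact ⟨Int.fract_nonneg _, Int.fract_lt_one _⟩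

lemma gauss_iterate_mem {x : ℝ} (hx : x ∈ Set.Ico (0:ℝ) 1) (n : ℕ) :
    gauss^[n] x ∈ Set.Ico (0:ℝ) 1 := by
  induction n with
  | zero => simpa
  | succ n ih => rw [Function.iterate_succ_apply']; exact gauss_mem_Ico ih

lemma cyl_step (k : ℤ) (hk : 0 < k) (s : List ℤ) (E : Set ℝ) :
    gauss^[s.length + 1] ⁻¹' E ∩ cyl (k :: s) =
      ((fun t => ((k : ℝ) + t)⁻¹) '' (gauss^[s.length] ⁻¹' E ∩ cyl s)) \ {1} := by
  ext x
  constructor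
  · rintro ⟨hxE, hIco, hdig⟩
    have hd0 : (⌊x⁻¹⌋ : ℤ) = k := by
      have := hdig 0 (by simp)
      simpa [cfDigit] using this
    have hx0 : x ≠ 0 := by
      rintro rfl
      rw [show ((0:ℝ)⁻¹) = 0 by simp] at hd0
      simp at hd0; omega
    have hxpos : 0 < x := lt_of_le_of_ne hIco.1 (Ne.symm hx0)
    have hfl : (k : ℝ) ≤ x⁻¹ := hd0 ▸ Int.floor_le x⁻¹
    have hfu : x⁻¹ < (k : ℝ) + 1 := by
      have := Int.lt_floor_add_one x⁻¹; rw [hd0] at this; exact_mod_cast this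
    set t := gauss x with htdef
    have hgt : t = x⁻¹ - (k : ℝ) := by rw [htdef, gauss, if_neg hx0, hd0]
    have htIco : t ∈ Set.Ico (0:ℝ) 1 := by rw [hgt]; constructor <;> [linarith; linarith]
    have hxt : x = ((k : ℝ) + t)⁻¹ := by
      rw [hgt]; rw [show (k:ℝ) + (x⁻¹ - k) = x⁻¹ by ring, inv_inv]
    refine ⟨⟨t, ⟨?_, htIco, ?_⟩, hxt.symm⟩, ?_⟩
    · show gauss^[s.length] t ∈ E
      rw [htdef, ← Function.iterate_succ_apply]
      exact hxE
    · intro i hi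
      have h1 : cfDigit t i = cfDigit x (i + 1) := by
        rw [cfDigit, cfDigit, htdef, ← Function.iterate_succ_apply]
      rw [h1, hdig (i + 1) (by simpa using Nat.succ_lt_succ hi)]
      simp
    · simp only [Set.mem_singleton_iff]
      intro h; rw [h] at hIco; exact absurd hIco.2 (lt_irrefl 1)
  · rintro ⟨⟨t, ⟨htE, htIco, htdig⟩, rfl⟩, hx1⟩
    simp only [Set.mem_singleton_iff] at hx1
    have hk1 : (1 : ℝ) ≤ (k : ℝ) := by exact_mod_cast hk
    have hpos : (0 : ℝ) < (k : ℝ) + t := by linarith [htIco.1]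
    set x := ((k : ℝ) + t)⁻¹ with hxdef
    have hxinv : x⁻¹ = (k : ℝ) + t := by rw [hxdef, inv_inv]
    have hxpos : 0 < x := by positivity
    have hxle : x ≤ 1 := by
      rw [hxdef]; apply inv_le_one_of_one_le₀; linarith [htIco.1]
    have hxlt : x < 1 := lt_of_le_of_ne hxle hx1
    have hfl : ⌊x⁻¹⌋ = k := by
      rw [hxinv, Int.floor_intCast_add, Int.floor_eq_zero_iff.2 (by exact_mod_cast htIco)]
      ring
    have hgx : gauss x = t := by
      rw [gauss, if_neg hxpos.ne', hfl, hxinv]; ring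
    refine ⟨?_, ⟨hxpos.le, hxlt⟩, ?_⟩
    · show gauss^[s.length + 1] x ∈ E
      rw [Function.iterate_succ_apply, hgx]; exact htE
    · intro i hi
      match i with
      | 0 =>
        simp only [cfDigit, Function.iterate_zero, id_eq, List.getD_cons_zero]
        exact hfl
      | (j + 1) =>
        have h1 : cfDigit x (j + 1) = cfDigit t j := by
          rw [cfDigit, cfDigit, Function.iterate_succ_apply, hgx]
        rw [h1]
        have hj : j < s.length := by simpa using Nat.lt_of_succ_lt_succ hi
        rw [htdig j hj]; simp

lemma cyl_master (s : List ℤ) (hs : ∀ k ∈ s, 0 < k) (E : Set ℝ)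
    (hE1 : E ⊆ Set.Ico (0:ℝ) 1) :
    ∃ G : Set ℝ, G.Finite ∧
      gauss^[s.length] ⁻¹' E ∩ cyl s ⊆ kmap s '' E ∧
      kmap s '' E ⊆ (gauss^[s.length] ⁻¹' E ∩ cyl s) ∪ G := by
  induction s with
  | nil =>
    have h1 : kmap [] '' E = E := by rw [show kmap [] = id from funext kmap_nil, Set.image_id]
    refine ⟨∅, Set.finite_empty, ?_, ?_⟩
    · rw [h1]; simp only [Function.iterate_zero, Set.preimage_id, List.length_nil]
      exact Set.inter_subset_left
    · rw [h1]; intro x hx; left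
      exact ⟨hx, hE1 hx, by simp [cyl]⟩
  | cons k s ih =>
    have hk := hs k List.mem_cons_self
    have hs' : ∀ c ∈ s, 0 < c := fun c hc => hs c (List.mem_cons_of_mem _ hc)
    obtain ⟨G, hGf, h1, h2⟩ := ih hs'
    have himg : kmap (k :: s) '' E = (fun t => ((k:ℝ) + t)⁻¹) '' (kmap s '' E) := by
      rw [← Set.image_comp]
      exact Set.image_congr fun x hx => kmap_cons hs' hk (hE1 hx).1
    have hstep := cyl_step k hk s E
    simp only [List.length_cons]
    refine ⟨{1} ∪ (fun t => ((k:ℝ) + t)⁻¹) '' G,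
      (Set.finite_singleton 1).union (hGf.image _), ?_, ?_⟩
    · rw [hstep, himg]
      exact Set.diff_subset.trans (Set.image_mono h1)
    · rw [hstep, himg]
      intro x hx
      have hx2 := Set.image_mono h2 hx
      rw [Set.image_union] at hx2
      rcases hx2 with hx2 | hx2
      · by_cases hone : x = 1
        · right; left; exact hone
        · left; exact ⟨hx2, hone⟩
      · right; right; exact hx2

lemma measurable_gauss : Measurable gauss := by
  unfold gauss
  refine Measurable.ite (measurableSet_singleton 0) measurable_const ?_
  exact measurable_inv.sub (measurable_from_top.comp (measurable_inv.floor))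

lemma measurable_cfDigit (i : ℕ) : Measurable fun x => cfDigit x i := by
  unfold cfDigit
  exact ((measurable_gauss.iterate i).inv).floor

lemma measurableSet_cyl (s : List ℤ) : MeasurableSet (cyl s) := by
  have : cyl s = Set.Ico (0:ℝ) 1 ∩ ⋂ (i : ℕ), ⋂ (_ : i < s.length),
      {x : ℝ | cfDigit x i = s.getD i 0} := by
    ext x; simp [cyl, Set.mem_iInter]
  rw [this]
  refine measurableSet_Ico.inter (MeasurableSet.iInter fun i => MeasurableSet.iInter fun _ => ?_)
  exact (measurable_cfDigit i) (measurableSet_singleton _)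

lemma gaussMeasure_bounds {X : Set ℝ} (hX : MeasurableSet X)
    (hX1 : X ⊆ Set.Ico (0:ℝ) 1) :
    ENNReal.ofReal (1/(2 * Real.log 2)) * volume X ≤ gaussMeasure X ∧
    gaussMeasure X ≤ ENNReal.ofReal (1/Real.log 2) * volume X := by
  have hL : 0 < Real.log 2 := Real.log_pos one_lt_two
  rw [gaussMeasure, withDensity_apply _ hX, Measure.restrict_restrict hX,
    Set.inter_eq_self_of_subset_left hX1]
  have hmeas : Measurable fun x : ℝ => ENNReal.ofReal (1 / (Real.log 2 * (1 + x))) := by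
    apply Measurable.ennreal_ofReal
    exact measurable_const.div (measurable_const.mul (measurable_const.add measurable_id))
  constructor
  · calc ENNReal.ofReal (1/(2 * Real.log 2)) * volume X
        = ∫⁻ _ in X, ENNReal.ofReal (1/(2 * Real.log 2)) := by rw [setLIntegral_const, mul_comm]
      _ ≤ ∫⁻ x in X, ENNReal.ofReal (1 / (Real.log 2 * (1 + x))) := by
          refine setLIntegral_mono hmeas (fun x hx => ?_)
          refine ENNReal.ofReal_le_ofReal
            (one_div_le_one_div_of_le (by nlinarith [(hX1 hx).1]) ?_)
          nlinarith [(hX1 hx).1, (hX1 hx).2]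
  · calc ∫⁻ x in X, ENNReal.ofReal (1 / (Real.log 2 * (1 + x)))
        ≤ ∫⁻ _ in X, ENNReal.ofReal (1/Real.log 2) := by
          refine setLIntegral_mono measurable_const (fun x hx => ?_)
          refine ENNReal.ofReal_le_ofReal
            (one_div_le_one_div_of_le (by nlinarith [(hX1 hx).1]) ?_)
          nlinarith [(hX1 hx).1]
      _ = ENNReal.ofReal (1/Real.log 2) * volume X := by rw [setLIntegral_const, mul_comm]

/-- Rényi's condition for the Gauss map: there is an absolute constant `C > 0` such
that for every measurable `E ⊆ [0,1)`, every `n`, and every rank-`n` cylinder `C_s`,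
`(1/C)·μ(E)·μ(C_s) ≤ μ(T^{-n}E ∩ C_s) ≤ C·μ(E)·μ(C_s)`. -/
theorem gauss_renyi_condition :
    ∃ C : ℝ, 0 < C ∧ ∀ (E : Set ℝ), MeasurableSet E → E ⊆ Set.Ico (0 : ℝ) 1 →
      ∀ (n : ℕ) (s : List ℤ), s.length = n → (∀ c ∈ s, 0 < c) →
        ENNReal.ofReal (1 / C) * (gaussMeasure E * gaussMeasure (cyl s)) ≤
            gaussMeasure ((gauss^[n]) ⁻¹' E ∩ cyl s) ∧
        gaussMeasure ((gauss^[n]) ⁻¹' E ∩ cyl s) ≤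
            ENNReal.ofReal C * (gaussMeasure E * gaussMeasure (cyl s)) := by
  refine ⟨16, by norm_num, ?_⟩
  intro E hE hE1 n s hlen hs
  subst hlen
  set L := Real.log 2 with hLdef
  have hL : 0 < L := Real.log_pos one_lt_two
  have hL1 : L ≤ 1 := by
    have := Real.log_two_lt_d9; rw [hLdef]; linarith
  have hLhalf : 1/2 ≤ L := by
    have := Real.log_two_gt_d9; rw [hLdef]; linarith
  have hd1' : (1:ℝ) ≤ ((konts s).2.2.2 : ℝ) := by
    exact_mod_cast (konts_prop' s hs).2.2.2.1
  set d := ((konts s).2.2.2 : ℝ) with hddef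
  have hd1 : (1:ℝ) ≤ d := hd1'
  have hd0 : (0:ℝ) < d := by linarith
  -- the intersection set and its measurability
  set A := gauss^[s.length] ⁻¹' E ∩ cyl s with hAdef
  have hAmeas : MeasurableSet A :=
    (hE.preimage (measurable_gauss.iterate s.length)).inter (measurableSet_cyl s)
  have hA1 : A ⊆ Set.Ico (0:ℝ) 1 := fun x hx => hx.2.1
  -- volume bounds for A
  obtain ⟨G, hGf, hsub1, hsub2⟩ := cyl_master s hs E hE1
  obtain ⟨himg1, himg2⟩ := kmap_image_volume_bounds hs hE hE1
  have hvolA_ub : volume A ≤ ENNReal.ofReal (1 / d^2) * volume E :=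
    (measure_mono hsub1).trans himg2
  have hvolA_lb : ENNReal.ofReal (1 / (4 * d^2)) * volume E ≤ volume A := by
    refine himg1.trans ?_
    calc volume (kmap s '' E) ≤ volume (A ∪ G) := measure_mono hsub2
      _ ≤ volume A + volume G := measure_union_le _ _
      _ = volume A := by rw [hGf.measure_zero, add_zero]
  -- volume bounds for cyl s
  have hcylpre : gauss^[s.length] ⁻¹' (Set.Ico (0:ℝ) 1) ∩ cyl s = cyl s := by
    exact Set.inter_eq_self_of_subset_right (fun x hx => gauss_iterate_mem hx.1 s.length)
  obtain ⟨G', hG'f, hsub1', hsub2'⟩ := cyl_master s hs (Set.Ico 0 1) subset_rfl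
  obtain ⟨himg1', himg2'⟩ := kmap_image_volume_bounds hs measurableSet_Ico subset_rfl
  rw [hcylpre] at hsub1' hsub2'
  have hvolIco : volume (Set.Ico (0:ℝ) 1) = 1 := by simp
  have hvolC_ub : volume (cyl s) ≤ ENNReal.ofReal (1 / d^2) := by
    refine (measure_mono hsub1').trans ?_
    rw [hvolIco, mul_one] at himg2'; exact himg2'
  have hvolC_lb : ENNReal.ofReal (1 / (4 * d^2)) ≤ volume (cyl s) := by
    rw [hvolIco, mul_one] at himg1'
    refine himg1'.trans ?_
    calc volume (kmap s '' Set.Ico 0 1) ≤ volume (cyl s ∪ G') := measure_mono hsub2'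
      _ ≤ volume (cyl s) + volume G' := measure_union_le _ _
      _ = volume (cyl s) := by rw [hG'f.measure_zero, add_zero]
  -- gauss measure vs volume
  obtain ⟨hE_lb, hE_ub⟩ := gaussMeasure_bounds hE hE1
  obtain ⟨hC_lb, hC_ub⟩ := gaussMeasure_bounds (measurableSet_cyl s) (fun x hx => hx.1)
  obtain ⟨hA_lb, hA_ub⟩ := gaussMeasure_bounds hAmeas hA1
  constructor
  · -- lower bound
    calc ENNReal.ofReal (1 / 16) * (gaussMeasure E * gaussMeasure (cyl s))
        ≤ ENNReal.ofReal (1 / 16) * ((ENNReal.ofReal (1/L) * volume E) *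
            (ENNReal.ofReal (1/L) * (ENNReal.ofReal (1 / d^2)))) := by
          refine mul_le_mul' le_rfl (mul_le_mul' hE_ub (hC_ub.trans ?_))
          exact mul_le_mul' le_rfl (by exact_mod_cast hvolC_ub)
      _ = ENNReal.ofReal ((1/16) * ((1/L) * ((1/L) * (1/d^2)))) * volume E := by
          rw [ENNReal.ofReal_mul (by positivity), ENNReal.ofReal_mul (by positivity),
            ENNReal.ofReal_mul (by positivity)]
          ring
      _ ≤ ENNReal.ofReal ((1/(2*L)) * (1/(4*d^2))) * volume E := by
          refine mul_le_mul' (ENNReal.ofReal_le_ofReal ?_) le_rfl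
          rw [show (1/16 : ℝ) * ((1/L) * ((1/L) * (1/d^2))) = 1/(16*(L*L)*d^2) by
            field_simp]
          rw [show (1/(2*L) : ℝ) * (1/(4*d^2)) = 1/(8*L*d^2) by field_simp; ring]
          refine one_div_le_one_div_of_le (by positivity) ?_
          nlinarith [mul_nonneg (mul_nonneg (by linarith : (0:ℝ) ≤ 2*L - 1) hL.le)
            (sq_nonneg d)]
      _ = ENNReal.ofReal (1/(2*L)) * (ENNReal.ofReal (1/(4*d^2)) * volume E) := by
          rw [ENNReal.ofReal_mul (by positivity)]; ring
      _ ≤ ENNReal.ofReal (1/(2*L)) * volume A := mul_le_mul' le_rfl hvolA_lb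
      _ ≤ gaussMeasure A := hA_lb
  · -- upper bound
    calc gaussMeasure A
        ≤ ENNReal.ofReal (1/L) * volume A := hA_ub
      _ ≤ ENNReal.ofReal (1/L) * (ENNReal.ofReal (1 / d^2) * volume E) :=
          mul_le_mul' le_rfl hvolA_ub
      _ = ENNReal.ofReal ((1/L) * (1/d^2)) * volume E := by
          rw [ENNReal.ofReal_mul (by positivity)]; ring
      _ ≤ ENNReal.ofReal (16 * ((1/(2*L)) * ((1/(2*L)) * (1/(4*d^2))))) * volume E := by
          refine mul_le_mul' (ENNReal.ofReal_le_ofReal ?_) le_rfl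
          rw [show (1/L : ℝ) * (1/d^2) = 1/(L*d^2) by field_simp]
          rw [show (16 : ℝ) * ((1/(2*L)) * ((1/(2*L)) * (1/(4*d^2)))) = 1/(L*L*d^2) by
            field_simp; ring]
          refine one_div_le_one_div_of_le (by positivity) ?_
          nlinarith [mul_nonneg (mul_nonneg (by linarith : (0:ℝ) ≤ 1 - L) hL.le)
            (sq_nonneg d)]
      _ = ENNReal.ofReal 16 * ((ENNReal.ofReal (1/(2*L)) * volume E) *
            (ENNReal.ofReal (1/(2*L)) * ENNReal.ofReal (1/(4*d^2)))) := by
          rw [ENNReal.ofReal_mul (by norm_num), ENNReal.ofReal_mul (by positivity),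
            ENNReal.ofReal_mul (by positivity)]
          ring
      _ ≤ ENNReal.ofReal 16 * (gaussMeasure E * gaussMeasure (cyl s)) := by
          refine mul_le_mul' le_rfl (mul_le_mul' hE_lb (le_trans ?_ hC_lb))
          exact mul_le_mul' le_rfl hvolC_lb
end

section
/- Let Ω ⊆ [0,1) be the irrationals, M a finite set, and T̃(x, M) = (Tx, f_{a₁(x)}(M)) a skew product over the Gauss map T, where f_a : M → M for each a ∈ ℕ and a₁(x) is the first partial quotient of x. Suppose T̃ is transitive (for any M₁, M₂ ∈ M there is a string s of positive integers of some length n with T̃^n(C_s × {M₁}) = Ω × {M₂}). Then there exists a 'traversing string' s = [c₁, …, c_n]: for every M₁, M₂ ∈ M there exists i < n such that T̃^i(C_s × {M₁}) ⊆ Ω × {M₂}. -/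
open MeasureTheory Filter

/-- The set of irrational points of `[0,1)`. -/
def Omega : Set ℝ := {x | x ∈ Set.Ico (0 : ℝ) 1 ∧ Irrational x}

/-- Running the cocycle along a string. -/
def run {M : Type*} (f : ℤ → M → M) : List ℤ → M → M
  | [], m => m
  | c :: s, m => run f s (f c m)

lemma run_append {M : Type*} (f : ℤ → M → M) (a b : List ℤ) (m : M) :
    run f (a ++ b) m = run f b (run f a m) := by
  induction a generalizing m with
  | nil => rfl
  | cons c t ih => simp [run, ih]

lemma gauss_mem_Omega {x : ℝ} (hx : x ∈ Omega) : gauss x ∈ Omega := by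
  obtain ⟨⟨h0, h1⟩, hirr⟩ := hx
  have hne : x ≠ 0 := fun h => by simp [h] at hirr
  have hinv : Irrational x⁻¹ := hirr.inv
  have : gauss x = Int.fract x⁻¹ := by rw [gauss, if_neg hne]; rfl
  refine ⟨⟨?_, ?_⟩, ?_⟩
  · rw [this]; exact Int.fract_nonneg _
  · rw [this]; exact Int.fract_lt_one _
  · rw [this]; exact hinv.sub_intCast _

lemma gauss_iter_mem_Omega {x : ℝ} (hx : x ∈ Omega) (n : ℕ) : gauss^[n] x ∈ Omega := by
  induction n with
  | zero => simpa using hx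
  | succ k ih => rw [Function.iterate_succ_apply']; exact gauss_mem_Omega ih

lemma cfDigit_gauss (x : ℝ) (j : ℕ) : cfDigit (gauss x) j = cfDigit x (j + 1) := by
  simp [cfDigit, Function.iterate_succ_apply]

lemma exists_omega : ∃ x, x ∈ Omega := by
  refine ⟨Real.sqrt 2 - 1, ⟨⟨?_, ?_⟩, ?_⟩⟩
  · have h1 : (1 : ℝ) ≤ Real.sqrt 2 := by
      nlinarith [Real.sq_sqrt (by norm_num : (2:ℝ) ≥ 0), Real.sqrt_nonneg 2]
    linarith
  · have h2 : Real.sqrt 2 < 2 := by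
      nlinarith [Real.sq_sqrt (by norm_num : (2:ℝ) ≥ 0), Real.sqrt_nonneg 2]
    linarith
  · simpa using irrational_sqrt_two.sub_intCast 1

section

variable {M : Type*} (f : ℤ → M → M) (Tt : ℝ × M → ℝ × M)
  (hTt : Tt = fun p => (gauss p.1, f (cfDigit p.1 0) p.2))

include hTt

lemma iter_eq : ∀ (s : List ℤ) (x : ℝ) (m : M),
    (∀ j < s.length, cfDigit x j = s.getD j 0) →
    Tt^[s.length] (x, m) = (gauss^[s.length] x, run f s m) := by
  intro s
  induction s with
  | nil => intro x m _; simp [run]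
  | cons c t ih =>
    intro x m h
    have h0 : Tt (x, m) = (gauss x, f c m) := by
      rw [hTt]
      have := h 0 (by simp)
      simp at this
      simp [this]
    rw [List.length_cons, Function.iterate_succ_apply, Function.iterate_succ_apply, h0]
    exact ih (gauss x) (f c m) (fun j hj => by
      rw [cfDigit_gauss]
      have := h (j + 1) (by simpa using Nat.succ_lt_succ hj)
      simpa using this)

lemma key_step (htrans : ∀ m₁ m₂ : M, ∃ s : List ℤ, (∀ c ∈ s, 0 < c) ∧
      Tt^[s.length] '' ((Omega ∩ cyl s) ×ˢ ({m₁} : Set M)) = Omega ×ˢ ({m₂} : Set M))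
    (m₁ m₂ : M) : ∃ t : List ℤ, (∀ c ∈ t, 0 < c) ∧ run f t m₁ = m₂ := by
  obtain ⟨t, hpos, himg⟩ := htrans m₁ m₂
  refine ⟨t, hpos, ?_⟩
  obtain ⟨x₀, hx₀⟩ := exists_omega
  have hne : (Tt^[t.length] '' ((Omega ∩ cyl t) ×ˢ ({m₁} : Set M))).Nonempty := by
    rw [himg]; exact ⟨(x₀, m₂), hx₀, rfl⟩
  obtain ⟨⟨x, mm⟩, ⟨hxO, hxC⟩, -⟩ := hne.of_image
  have hmem : Tt^[t.length] (x, m₁) ∈ Omega ×ˢ ({m₂} : Set M) := by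
    rw [← himg]; exact ⟨(x, m₁), ⟨⟨hxO, hxC⟩, rfl⟩, rfl⟩
  have := iter_eq f Tt hTt t x m₁ hxC.2
  rw [this] at hmem
  exact hmem.2

lemma build (htrans : ∀ m₁ m₂ : M, ∃ s : List ℤ, (∀ c ∈ s, 0 < c) ∧
      Tt^[s.length] '' ((Omega ∩ cyl s) ×ˢ ({m₁} : Set M)) = Omega ×ˢ ({m₂} : Set M)) :
    ∀ L : List (M × M), ∃ s : List ℤ, (∀ c ∈ s, 0 < c) ∧
      ∀ p ∈ L, ∃ pre, pre <+: s ∧ run f pre p.1 = p.2 := by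
  intro L
  induction L with
  | nil => exact ⟨[], by simp, by simp⟩
  | cons p L' ih =>
    obtain ⟨s', hpos', hs'⟩ := ih
    obtain ⟨t, hpost, hrt⟩ := key_step f Tt hTt htrans (run f s' p.1) p.2
    refine ⟨s' ++ t, ?_, ?_⟩
    · intro c hc
      rcases List.mem_append.1 hc with h | h
      · exact hpos' c h
      · exact hpost c h
    · intro q hq
      rcases List.mem_cons.1 hq with rfl | hq'
      · exact ⟨s' ++ t, List.prefix_refl _, by rw [run_append, hrt]⟩
      · obtain ⟨pre, hpre, hrun⟩ := hs' q hq'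
        exact ⟨pre, hpre.trans (List.prefix_append _ _), hrun⟩

end

/-- Existence of a traversing string: if the skew product
`T̃(x, m) = (Tx, f_{a₁(x)}(m))` over the Gauss map (with `M` finite) is transitive,
then there is a string `s` such that for every `m₁, m₂ ∈ M` there is `i < |s|` with
`T̃^i(C_s × {m₁}) ⊆ Ω × {m₂}`. -/
theorem exists_traversing_string (M : Type*) [Fintype M] [Nonempty M]
    (f : ℤ → M → M) (Tt : ℝ × M → ℝ × M)
    (hTt : Tt = fun p => (gauss p.1, f (cfDigit p.1 0) p.2))
    (htrans : ∀ m₁ m₂ : M, ∃ s : List ℤ, (∀ c ∈ s, 0 < c) ∧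
      Tt^[s.length] '' ((Omega ∩ cyl s) ×ˢ ({m₁} : Set M)) = Omega ×ˢ ({m₂} : Set M)) :
    ∃ s : List ℤ, (∀ c ∈ s, 0 < c) ∧ ∀ m₁ m₂ : M, ∃ i < s.length,
      Tt^[i] '' ((Omega ∩ cyl s) ×ˢ ({m₁} : Set M)) ⊆ Omega ×ˢ ({m₂} : Set M) := by
  classical
  obtain ⟨s₀, hpos₀, hs₀⟩ := build f Tt hTt htrans (Finset.univ.toList (α := M × M))
  refine ⟨s₀ ++ [1], ?_, ?_⟩
  · intro c hc
    rcases List.mem_append.1 hc with h | h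
    · exact hpos₀ c h
    · simp at h; omega
  · intro m₁ m₂
    obtain ⟨pre, hpre, hrun⟩ := hs₀ (m₁, m₂) (by simp)
    refine ⟨pre.length, ?_, ?_⟩
    · have := hpre.length_le
      simp only [List.length_append, List.length_singleton]
      omega
    · rintro ⟨y, m⟩ ⟨⟨x, mm⟩, ⟨⟨hxO, hxC⟩, hmm⟩, heq⟩
      simp only [Set.mem_singleton_iff] at hmm
      rw [hmm] at heq
      have hpre' : pre <+: s₀ ++ [1] := hpre.trans (List.prefix_append _ _)
      obtain ⟨u, hu⟩ := hpre'
      have hdig : ∀ j < pre.length, cfDigit x j = pre.getD j 0 := by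
        intro j hj
        have h1 := hxC.2 j (by rw [← hu]; simp; omega)
        rw [← hu] at h1
        rwa [List.getD_append _ _ _ _ hj] at h1
      have := iter_eq f Tt hTt pre x m₁ hdig
      rw [this] at heq
      rw [← heq]
      exact ⟨gauss_iter_mem_Omega hxO pre.length, by simpa using hrun⟩
end
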